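/- arXiv:1803.04058 — 9 statements merged into one kernel-verified Lean document; each statement's English description precedes it below -/
import Mathlib

section
/- Fix integers K ≥ 1 and M ≥ 1 with K ≥ M + 1. At μ = 1, the maximum of δ_LB(1,ℓ,s) over all admissible pairs (ℓ,s) equals K/(M+1), attained at (ℓ,s) = (0, M+1); in particular max{1, max over admissible (ℓ,s) of δ_LB(1,ℓ,s)} = K/(M+1). -/
/-- The family of lower bounds on the NDT from Theorem 1:
`δ_LB(μ,ℓ,s) = (K + ℓ − μ·(s̄·(K − s + (s̄−1)/2) + ℓ(ℓ+1)/2))/s` with `s̄ = M+1−s`. -/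
noncomputable def deltaLB (K M : ℕ) (μ : ℝ) (ℓ s : ℕ) : ℝ :=
  ((K : ℝ) + ℓ -
      μ * (((M : ℝ) + 1 - s) * ((K : ℝ) - s + ((M : ℝ) + 1 - s - 1) / 2) +
        (ℓ : ℝ) * ((ℓ : ℝ) + 1) / 2)) / s

/-- A pair `(ℓ,s)` is admissible if `1 ≤ s ≤ min(M+1,K)` and `M+1−s ≤ ℓ ≤ M`. -/
def Admissible (K M : ℕ) (ℓ s : ℕ) : Prop :=
  1 ≤ s ∧ s ≤ min (M + 1) K ∧ M + 1 - s ≤ ℓ ∧ ℓ ≤ M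

/-- Supremum of the lower-bound family `δ_LB(μ,ℓ,s)` over admissible pairs `(ℓ,s)`. -/
noncomputable def lbSup (K M : ℕ) (μ : ℝ) : ℝ :=
  sSup {x : ℝ | ∃ ℓ s : ℕ, Admissible K M ℓ s ∧ x = deltaLB K M μ ℓ s}

lemma aux_nat_sq (n : ℕ) : (0:ℝ) ≤ (n:ℝ) * ((n:ℝ) - 1) := by
  rcases Nat.eq_zero_or_pos n with h | h
  · simp [h]
  · have h1 : (1:ℝ) ≤ (n:ℝ) := by exact_mod_cast h
    nlinarith

/-- For K ≥ M+1, at μ = 1 the maximum of δ_LB(1,ℓ,s) over admissible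
pairs is K/(M+1), attained at (ℓ,s) = (0,M+1); in particular
max{1, max over admissible pairs} = K/(M+1). -/
theorem stmt2 (K M : ℕ) (hM : 1 ≤ M) (hK : M + 1 ≤ K) :
    Admissible K M 0 (M + 1) ∧
    deltaLB K M 1 0 (M + 1) = (K : ℝ) / ((M : ℝ) + 1) ∧
    (∀ ℓ s : ℕ, Admissible K M ℓ s → deltaLB K M 1 ℓ s ≤ (K : ℝ) / ((M : ℝ) + 1)) ∧
    max 1 (lbSup K M 1) = (K : ℝ) / ((M : ℝ) + 1) := by
  have hK' : (M:ℝ) + 1 ≤ (K:ℝ) := by exact_mod_cast hK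
  have hM1 : (0:ℝ) < (M:ℝ) + 1 := by positivity
  have hadm : Admissible K M 0 (M + 1) := ⟨by omega, by omega, by omega, by omega⟩
  have hval : deltaLB K M 1 0 (M + 1) = (K:ℝ) / ((M:ℝ) + 1) := by
    unfold deltaLB
    push_cast
    ring_nf
  have hle : ∀ ℓ s : ℕ, Admissible K M ℓ s → deltaLB K M 1 ℓ s ≤ (K:ℝ) / ((M:ℝ) + 1) := by
    rintro ℓ s ⟨h1, h2, h3, h4⟩
    have hsK : s ≤ K := le_trans h2 (min_le_right _ _)
    have hsM : s ≤ M + 1 := le_trans h2 (min_le_left _ _)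
    have hs0 : (0:ℝ) < (s:ℝ) := by exact_mod_cast h1
    have hsMr : (s:ℝ) ≤ (M:ℝ) + 1 := by exact_mod_cast hsM
    have hsKr : (s:ℝ) ≤ (K:ℝ) := by exact_mod_cast hsK
    have h4r : (ℓ:ℝ) ≤ (M:ℝ) := by exact_mod_cast h4
    have h3r : (M:ℝ) + 1 - (s:ℝ) ≤ (ℓ:ℝ) := by
      have := (Nat.cast_le (α := ℝ)).2 h3
      rw [Nat.cast_sub hsM] at this
      push_cast at this
      linarith
    have hsb : ((M:ℝ) + 1 - s) = ((M + 1 - s : ℕ) : ℝ) := by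
      rw [Nat.cast_sub hsM]; push_cast; ring
    have hB : (0:ℝ) ≤ ((M:ℝ) + 1 - s) * ((M:ℝ) + 1 - s - 1) := by
      rw [hsb]; exact aux_nat_sq _
    have hC : (0:ℝ) ≤ (ℓ:ℝ) * ((ℓ:ℝ) - 1) := aux_nat_sq ℓ
    have hA : (0:ℝ) ≤ ((M:ℝ) + 1 - s) * ((K:ℝ) - ((M:ℝ) + 1)) := by
      apply mul_nonneg <;> linarith
    have hMr : (1:ℝ) ≤ (M:ℝ) := by exact_mod_cast hM
    unfold deltaLB
    rw [div_le_div_iff₀ hs0 hM1]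
    nlinarith [mul_nonneg (mul_nonneg (by linarith : (0:ℝ) ≤ (M:ℝ)) (by linarith : (0:ℝ) ≤ (M:ℝ)+1-(s:ℝ))) (by linarith : (0:ℝ) ≤ (K:ℝ)-((M:ℝ)+1)), hB, hC, hA, mul_nonneg (le_of_lt hM1) hB, mul_nonneg (le_of_lt hM1) hC]
  refine ⟨hadm, hval, hle, ?_⟩
  have hmem : (K:ℝ) / ((M:ℝ) + 1) ∈ {x : ℝ | ∃ ℓ s : ℕ, Admissible K M ℓ s ∧ x = deltaLB K M 1 ℓ s} :=
    ⟨0, M + 1, hadm, hval.symm⟩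
  have hbdd : BddAbove {x : ℝ | ∃ ℓ s : ℕ, Admissible K M ℓ s ∧ x = deltaLB K M 1 ℓ s} := by
    refine ⟨(K:ℝ) / ((M:ℝ) + 1), ?_⟩
    rintro x ⟨ℓ, s, ha, rfl⟩
    exact hle ℓ s ha
  have hsup : lbSup K M 1 = (K:ℝ) / ((M:ℝ) + 1) := by
    unfold lbSup
    apply le_antisymm
    · apply csSup_le ⟨_, hmem⟩
      rintro x ⟨ℓ, s, ha, rfl⟩
      exact hle ℓ s ha
    · exact le_csSup hbdd hmem
  rw [hsup, max_eq_right]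
  rw [le_div_iff₀ hM1]
  linarith
end

section
/- Fix integers K ≥ 1 and M ≥ 1 with K ≤ M (i.e., M+1 > K). At μ = 1, every admissible pair (ℓ,s) satisfies δ_LB(1,ℓ,s) ≤ 1; hence max{1, max over admissible (ℓ,s) of δ_LB(1,ℓ,s)} = 1. -/
/-- For K ≤ M, at μ = 1 every admissible pair satisfies
δ_LB(1,ℓ,s) ≤ 1; hence max{1, max over admissible pairs} = 1. -/
theorem stmt3 (K M : ℕ) (hK : 1 ≤ K) (hKM : K ≤ M) :
    (∀ ℓ s : ℕ, Admissible K M ℓ s → deltaLB K M 1 ℓ s ≤ 1) ∧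
    max 1 (lbSup K M 1) = 1 := by
  have hmain : ∀ ℓ s : ℕ, Admissible K M ℓ s → deltaLB K M 1 ℓ s ≤ 1 := by
    rintro ℓ s ⟨hs1, hs2, hl1, hl2⟩
    have hsK : s ≤ K := le_trans hs2 (min_le_right _ _)
    have hsM1 : s ≤ M + 1 := le_trans hs2 (min_le_left _ _)
    have hs1' : (1:ℝ) ≤ s := by exact_mod_cast hs1
    have hsK' : (s:ℝ) ≤ K := by exact_mod_cast hsK
    have hKM' : (K:ℝ) ≤ M := by exact_mod_cast hKM
    have hl1' : (M:ℝ) + 1 - s ≤ ℓ := by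
      have h : ((M+1-s:ℕ):ℝ) ≤ ℓ := by exact_mod_cast hl1
      rwa [Nat.cast_sub hsM1, Nat.cast_add, Nat.cast_one] at h
    have hl2' : (ℓ:ℝ) ≤ M := by exact_mod_cast hl2
    have hspos : (0:ℝ) < s := by linarith
    rw [deltaLB, div_le_one hspos]
    nlinarith [mul_nonneg (by linarith : (0:ℝ) ≤ (ℓ:ℝ) - ((M:ℝ)+1-s))
        (by linarith : (0:ℝ) ≤ (ℓ:ℝ) + ((M:ℝ)+1-s) - 1),
      mul_nonneg (by linarith : (0:ℝ) ≤ ((M:ℝ)+1-s) - 1)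
        (by linarith : (0:ℝ) ≤ (K:ℝ) - s + ((M:ℝ)+1-s))]
  refine ⟨hmain, max_eq_left ?_⟩
  apply Real.sSup_le _ zero_le_one
  rintro x ⟨ℓ, s, hadm, rfl⟩
  exact hmain ℓ s hadm
end

section
/- Let K ≥ 1 and M ≥ 3 be integers and let μ be a real number with 0 ≤ μ ≤ 1/M. Then (K + M − μM(K + (M+1)/2)) / (K + M − μM(K + M − 1)) ≤ (M−1)/2. (The numerator is the memory-sharing one-shot NDT on the transition segment between μ = 0 and μ = 1/M, the denominator is the lower bound δ_LB(μ,M,1) = K + M − μM(K+M−1), and the bound (M−1)/2 is Corollary 2, part 1a.) -/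
/-- for K ≥ 1, M ≥ 3 and 0 ≤ μ ≤ 1/M, the ratio of the memory-sharing
one-shot NDT K + M − μM(K + (M+1)/2) to the lower bound K + M − μM(K+M−1) is at most
(M−1)/2  (Corollary 2, part 1a). -/
theorem stmt11 (K M : ℕ) (hK : 1 ≤ K) (hM : 3 ≤ M) (μ : ℝ)
    (h0 : 0 ≤ μ) (h1 : μ ≤ 1 / (M : ℝ)) :
    ((K : ℝ) + M - μ * M * ((K : ℝ) + ((M : ℝ) + 1) / 2)) /
        ((K : ℝ) + M - μ * M * ((K : ℝ) + M - 1))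
      ≤ ((M : ℝ) - 1) / 2 := by
  have hM' : (3 : ℝ) ≤ (M : ℝ) := by exact_mod_cast hM
  have hK' : (1 : ℝ) ≤ (K : ℝ) := by exact_mod_cast hK
  have hMpos : (0 : ℝ) < M := by linarith
  have ht1 : μ * M ≤ 1 := by
    calc μ * M ≤ (1 / M) * M := mul_le_mul_of_nonneg_right h1 hMpos.le
      _ = 1 := by field_simp
  have hden : (0 : ℝ) < (K : ℝ) + M - μ * M * ((K : ℝ) + M - 1) := by nlinarith
  rw [div_le_div_iff₀ hden (by norm_num : (0:ℝ) < 2)]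
  nlinarith [mul_nonneg h0 hMpos.le, mul_nonneg (sub_nonneg.mpr ht1) (by linarith : (0:ℝ) ≤ (K:ℝ)+M)]
end

section
/- Let K ≥ 2 and M ≥ 2 be integers, set μ̃ = min(1/M, (K+M+1)/((M+1)(K+M−1))), and let μ be a real number with 0 ≤ μ ≤ μ̃. Then (K + M − μM(K/2 + (3M+1)/4)) / (K + M − μM(K + M − 1)) ≤ 1 + (K/2 + (M−5)/4)·min(1, (M/K)·(K+M+1)/(K+M−1)). -/
/-- for K, M ≥ 2 and 0 ≤ μ ≤ μ̃ with
μ̃ = min(1/M, (K+M+1)/((M+1)(K+M−1))):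
(K + M − μM(K/2 + (3M+1)/4)) / (K + M − μM(K + M − 1))
  ≤ 1 + (K/2 + (M−5)/4)·min(1, (M/K)·(K+M+1)/(K+M−1)). -/
theorem stmt13 (K M : ℕ) (hK : 2 ≤ K) (hM : 2 ≤ M) (μ : ℝ) (h0 : 0 ≤ μ)
    (h1 : μ ≤ min (1 / (M : ℝ))
        (((K : ℝ) + M + 1) / (((M : ℝ) + 1) * ((K : ℝ) + M - 1)))) :
    ((K : ℝ) + M - μ * M * ((K : ℝ) / 2 + (3 * (M : ℝ) + 1) / 4)) /
        ((K : ℝ) + M - μ * M * ((K : ℝ) + M - 1))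
      ≤ 1 + ((K : ℝ) / 2 + ((M : ℝ) - 5) / 4) *
          min 1 (((M : ℝ) / K) * ((K : ℝ) + M + 1) / ((K : ℝ) + M - 1)) := by
  have ha : (2:ℝ) ≤ (K:ℝ) := by exact_mod_cast hK
  have hb : (2:ℝ) ≤ (M:ℝ) := by exact_mod_cast hM
  set a := (K:ℝ)
  set b := (M:ℝ)
  have hb0 : (0:ℝ) < b := by linarith
  have ha0 : (0:ℝ) < a := by linarith
  have hs : (0:ℝ) < a + b - 1 := by linarith
  have h1a : μ ≤ 1 / b := le_trans h1 (min_le_left _ _)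
  have h1b : μ ≤ (a + b + 1) / ((b + 1) * (a + b - 1)) :=
    le_trans h1 (min_le_right _ _)
  have hμb : μ * b ≤ 1 := by
    have := (le_div_iff₀ hb0).mp h1a
    linarith
  have hkey : μ * ((b + 1) * (a + b - 1)) ≤ a + b + 1 := by
    have hpos : (0:ℝ) < (b + 1) * (a + b - 1) := by positivity
    exact (le_div_iff₀ hpos).mp h1b
  have hD : (0:ℝ) < a + b - μ * b * (a + b - 1) := by nlinarith
  have hc : (0:ℝ) ≤ a / 2 + (b - 5) / 4 := by linarith
  rcases min_cases (1:ℝ) ((b / a) * (a + b + 1) / (a + b - 1)) with ⟨hmin, hle⟩ | ⟨hmin, hle⟩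
  · rw [hmin, div_le_iff₀ hD]
    nlinarith [mul_nonneg hc (mul_nonneg (by linarith : (0:ℝ) ≤ a + b) (by linarith : (0:ℝ) ≤ 1 - μ * b))]
  · rw [hmin, div_le_iff₀ hD]
    set q := b / a * (a + b + 1) / (a + b - 1) with hqdef
    set D := a + b - μ * b * (a + b - 1) with hDdef
    have hpos : (0:ℝ) < a * (a + b - 1) := mul_pos ha0 hs
    have hq2 : μ * b * (a * (a + b - 1)) ≤ q * D * (a * (a + b - 1)) := by
      have hqe : q * D * (a * (a + b - 1)) = b * (a + b + 1) * D := by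
        rw [hqdef]; field_simp
      rw [hqe, hDdef]
      nlinarith [mul_le_mul_of_nonneg_right
        (mul_le_mul_of_nonneg_right hkey (by linarith : (0:ℝ) ≤ a + b)) hb0.le]
    have hq3 : μ * b ≤ q * D := le_of_mul_le_mul_right hq2 hpos
    nlinarith [mul_nonneg hc (sub_nonneg.mpr hq3)]
end

section
/- Let K and M be integers with K > M ≥ 2, set μ̃ = (K+M+1)/((M+1)(K+M−1)), and let μ be a real number with μ̃ ≤ μ ≤ 1/M. Then ((M+1)/K)·(K + M − μM(K/2 + (3M+1)/4)) ≤ 1 + (K/2 + (M−5)/4)·(M/K)·(K+M+1)/(K+M−1). -/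
/-- for K > M ≥ 2 and μ̃ ≤ μ ≤ 1/M with
μ̃ = (K+M+1)/((M+1)(K+M−1)):
((M+1)/K)·(K + M − μM(K/2 + (3M+1)/4))
  ≤ 1 + (K/2 + (M−5)/4)·(M/K)·(K+M+1)/(K+M−1). -/
theorem stmt14 (K M : ℕ) (hM : 2 ≤ M) (hKM : M < K) (μ : ℝ)
    (hl : ((K : ℝ) + M + 1) / (((M : ℝ) + 1) * ((K : ℝ) + M - 1)) ≤ μ)
    (hu : μ ≤ 1 / (M : ℝ)) :
    (((M : ℝ) + 1) / K) * ((K : ℝ) + M - μ * M * ((K : ℝ) / 2 + (3 * (M : ℝ) + 1) / 4))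
      ≤ 1 + ((K : ℝ) / 2 + ((M : ℝ) - 5) / 4) * ((M : ℝ) / K) *
          ((K : ℝ) + M + 1) / ((K : ℝ) + M - 1) := by
  have hm : (2:ℝ) ≤ (M:ℝ) := by exact_mod_cast hM
  have hk : (M:ℝ) + 1 ≤ (K:ℝ) := by exact_mod_cast hKM
  have hK0 : (0:ℝ) < K := by linarith
  have hD : (0:ℝ) < (K:ℝ) + M - 1 := by linarith
  have hl' : ((K : ℝ) + M + 1) ≤ μ * (((M : ℝ) + 1) * ((K : ℝ) + M - 1)) := by
    rw [div_le_iff₀ (by positivity)] at hl; linarith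
  rw [← sub_nonneg]
  have key : 1 + ((K : ℝ) / 2 + ((M : ℝ) - 5) / 4) * ((M : ℝ) / K) *
          ((K : ℝ) + M + 1) / ((K : ℝ) + M - 1)
        - (((M : ℝ) + 1) / K) * ((K : ℝ) + M - μ * M * ((K : ℝ) / 2 + (3 * (M : ℝ) + 1) / 4)) =
      ((M : ℝ) * ((K : ℝ)/2 + (3*(M:ℝ)+1)/4) / ((K : ℝ) * ((K : ℝ) + M - 1))) *
        (μ * (((M : ℝ) + 1) * ((K : ℝ) + M - 1)) - ((K : ℝ) + M + 1)) := by
    field_simp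
    ring
  rw [key]
  apply mul_nonneg (by positivity)
  linarith
end

section
/- Let K ≥ 1 and M ≥ 1 be integers, let d be a real number with 1 ≤ d ≤ M + 1, and let μ be a real number with (M+1−d)/(dM) ≤ μ ≤ 1. Then (K + M(1−μ)/(1+μM)) / (1+μM) ≤ d(K + d − 1)/(M+1), with equality at μ = (M+1−d)/(dM). (Dividing by the lower bound max{1, K/(M+1)} yields the multiplicative gap dK/max{M+1,K} + d(d−1)/max{M+1,K} of Corollary 3, part 2b, and Corollary 4, part 3b.) -/
/-- for K, M ≥ 1, 1 ≤ d ≤ M+1 and (M+1−d)/(dM) ≤ μ ≤ 1: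
(K + M(1−μ)/(1+μM)) / (1+μM) ≤ d(K + d − 1)/(M+1), with equality at
μ = (M+1−d)/(dM)  (Corollary 3, part 2b, and Corollary 4, part 3b). -/
theorem stmt15 (K M : ℕ) (hK : 1 ≤ K) (hM : 1 ≤ M) (d μ : ℝ)
    (hd1 : 1 ≤ d) (hd2 : d ≤ (M : ℝ) + 1)
    (hμl : ((M : ℝ) + 1 - d) / (d * M) ≤ μ) (hμu : μ ≤ 1) :
    ((K : ℝ) + (M : ℝ) * (1 - μ) / (1 + μ * M)) / (1 + μ * M)
        ≤ d * ((K : ℝ) + d - 1) / ((M : ℝ) + 1) ∧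
    (μ = ((M : ℝ) + 1 - d) / (d * M) →
      ((K : ℝ) + (M : ℝ) * (1 - μ) / (1 + μ * M)) / (1 + μ * M)
        = d * ((K : ℝ) + d - 1) / ((M : ℝ) + 1)) := by
  have hM0 : (0:ℝ) < (M:ℝ) := by exact_mod_cast hM
  have hK1 : (1:ℝ) ≤ (K:ℝ) := by exact_mod_cast hK
  have hd0 : (0:ℝ) < d := lt_of_lt_of_le one_pos hd1
  -- lower bound on t = 1 + μM
  have hdt : (M:ℝ) + 1 ≤ d * (1 + μ * (M:ℝ)) := by
    have h1 : ((M : ℝ) + 1 - d) / (d * M) * (d * M) ≤ μ * (d * M) := by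
      apply mul_le_mul_of_nonneg_right hμl (by positivity)
    rw [div_mul_cancel₀ _ (by positivity)] at h1
    nlinarith [h1]
  have ht0 : (0:ℝ) < 1 + μ * M := by nlinarith
  set t := 1 + μ * (M:ℝ) with hts
  have hnum : (M:ℝ) * (1 - μ) = (M:ℝ) + 1 - t := by ring
  constructor
  · rw [hnum, show (↑K + ((M:ℝ)+1-t)/t)/t = ((K:ℝ)*t + ((M:ℝ)+1-t))/(t*t) from by
      field_simp]
    rw [div_le_div_iff₀ (by positivity) (by positivity)]
    have h2 : (0:ℝ) ≤ (d * t - ((M:ℝ)+1)) * ((K:ℝ) - 1) * t := by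
      apply mul_nonneg (mul_nonneg (by linarith) (by linarith)) ht0.le
    have h3 : (0:ℝ) ≤ (d * t - ((M:ℝ)+1)) * (d * t) := by
      apply mul_nonneg (by linarith) (by positivity)
    nlinarith [h2, h3, ht0, hK1]
  · intro hμ
    have hμM : μ * (M:ℝ) = ((M:ℝ) + 1 - d) / d := by
      rw [hμ]; field_simp
    have htv : t = ((M:ℝ) + 1) / d := by
      rw [hts, hμM]; field_simp; ring
    rw [hnum, htv]
    field_simp
    ring
end

section
/- Fix integers K ≥ 1, M ≥ 1 and an integer p with ⌈(M−1)/2⌉ ≤ p ≤ M, and set μ = p/M. Then the one-shot NDT satisfies δ_OS(μ) ≤ (8/3) · max{1, max over admissible (ℓ,s) of δ_LB(μ,ℓ,s)}. That is, for fractional cache sizes μ ≥ ⌈(M−1)/2⌉/M the one-shot scheme is within a constant multiplicative factor 8/3 of the Theorem-1 lower bound on the optimal NDT (Corollary 5). -/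
/-- The Maddah-Ali–Niesen NDT at fractional cache size μ = p/M:
δ_MAN = (M − p)/(1 + p). -/
noncomputable def deltaMAN (M p : ℕ) : ℝ := ((M : ℝ) - p) / (1 + p)

/-- The achievable one-shot NDT of Theorem 2 at fractional cache size μ = p/M:
δ_OS = max{δ_MAN, (K + δ_MAN·𝟙[K>p]) / min(K, 1+p)}. -/
noncomputable def deltaOS (K M p : ℕ) : ℝ :=
  max (deltaMAN M p)
    (((K : ℝ) + deltaMAN M p * (if p < K then 1 else 0)) / min (K : ℝ) (1 + (p : ℝ)))

lemma lb_le_sup (K M : ℕ) (μ : ℝ) {ℓ s : ℕ} (h : Admissible K M ℓ s) :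
    deltaLB K M μ ℓ s ≤ lbSup K M μ := by
  apply le_csSup
  · apply BddAbove.mono _ ((Finset.range (M + 1) ×ˢ Finset.range (M + 2)).image
      (fun q : ℕ × ℕ => deltaLB K M μ q.1 q.2)).bddAbove
    rintro x ⟨l, t, hadm, rfl⟩
    simp only [Finset.coe_image, Set.mem_image, Finset.mem_coe, Finset.mem_product,
      Finset.mem_range]
    have h1 : l ≤ M := hadm.2.2.2
    have h2 := le_trans hadm.2.1 (min_le_left (M + 1) K)
    exact ⟨(l, t), ⟨by omega, by omega⟩, rfl⟩
  · exact ⟨ℓ, s, h, rfl⟩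

set_option maxHeartbeats 1000000 in
/-- Corollary 5: for K, M ≥ 1 and an integer p with
⌈(M−1)/2⌉ ≤ p ≤ M, at μ = p/M the one-shot NDT is within a factor 8/3 of the
Theorem-1 lower bound max{1, max over admissible (ℓ,s) of δ_LB(μ,ℓ,s)}. -/
theorem stmt17 (K M p : ℕ) (hK : 1 ≤ K) (hM : 1 ≤ M)
    (hp1 : ((M : ℝ) - 1) / 2 ≤ (p : ℝ)) (hp2 : p ≤ M) :
    deltaOS K M p ≤ 8 / 3 * max 1 (lbSup K M ((p : ℝ) / M)) := by
  have hMp : M ≤ 2 * p + 1 := by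
    have h : (M : ℝ) ≤ ((2 * p + 1 : ℕ) : ℝ) := by push_cast; linarith
    exact_mod_cast h
  have hp2R : (p : ℝ) ≤ M := Nat.cast_le.mpr hp2
  have hp0 : (0 : ℝ) ≤ p := Nat.cast_nonneg p
  have hp1pos : (0 : ℝ) < 1 + (p : ℝ) := by positivity
  have hman : deltaMAN M p ≤ 1 := by
    rw [deltaMAN, div_le_one hp1pos]; linarith
  have hmax1 : (1 : ℝ) ≤ max 1 (lbSup K M ((p : ℝ) / M)) := le_max_left _ _
  have hrhs : (8 : ℝ) / 3 ≤ 8 / 3 * max 1 (lbSup K M ((p : ℝ) / M)) := by nlinarith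
  by_cases hpK : p < K
  · -- min(K, 1+p) = 1+p, indicator = 1
    have hKp : (1 : ℝ) + p ≤ K := by
      have : ((p + 1 : ℕ) : ℝ) ≤ K := Nat.cast_le.mpr hpK
      push_cast at this; linarith
    have hmin : min (K : ℝ) (1 + (p : ℝ)) = 1 + (p : ℝ) := min_eq_right hKp
    have hOS : deltaOS K M p ≤ ((K : ℝ) + 1) / (1 + p) := by
      rw [deltaOS, if_pos hpK, hmin]
      apply max_le
      · calc deltaMAN M p ≤ 1 := hman
          _ ≤ ((K : ℝ) + 1) / (1 + p) := by rw [le_div_iff₀ hp1pos]; linarith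
      · exact (div_le_div_iff_of_pos_right hp1pos).mpr (by linarith)
    by_cases h83 : 3 * (K + 1) ≤ 8 * (p + 1)
    · have : ((K : ℝ) + 1) / (1 + p) ≤ 8 / 3 := by
        rw [div_le_div_iff₀ hp1pos (by norm_num : (0:ℝ) < 3)]
        have : (3 : ℝ) * (K + 1) ≤ 8 * (p + 1) := by exact_mod_cast h83
        linarith
      linarith [hOS]
    · push_neg at h83
      have h83R : 8 * ((p : ℝ) + 1) < 3 * ((K : ℝ) + 1) := by exact_mod_cast h83
      have hKM : M + 1 ≤ K := by omega
      have hKMR : (M : ℝ) + 1 ≤ K := by exact_mod_cast hKM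
      have hadm : Admissible K M 1 (M + 1) :=
        ⟨by omega, by omega, by omega, hM⟩
      have hle := lb_le_sup K M ((p : ℝ) / M) hadm
      have hMpos : (0 : ℝ) < M := by exact_mod_cast hM
      have hval : deltaLB K M ((p : ℝ) / M) 1 (M + 1)
          = ((K : ℝ) + 1 - (p : ℝ) / M) / (M + 1) := by
        rw [deltaLB]; push_cast; ring_nf
      have hkey : ((K : ℝ) + 1) / (1 + p)
          ≤ 8 / 3 * (((K : ℝ) + 1 - (p : ℝ) / M) / (M + 1)) := by
        have hrw : 8 / 3 * (((K : ℝ) + 1 - (p : ℝ) / M) / (M + 1))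
            = (8 * ((M : ℝ) * (K + 1) - p)) / (3 * M * (M + 1)) := by
          field_simp
        rw [hrw, div_le_div_iff₀ hp1pos (by positivity)]
        have hM1R : (1 : ℝ) ≤ M := by exact_mod_cast hM
        have hc1 : (0 : ℝ) ≤ 8 * ((p : ℝ) + 1) - 4 * ((M : ℝ) + 1) := by linarith
        have hb : (p : ℝ) ≤ (M : ℝ) * ((K : ℝ) + 1) := by nlinarith
        have h4p : 4 * (p : ℝ) ≤ (M : ℝ) * ((K : ℝ) + 1) := by
          rcases le_or_gt (p : ℝ) 2 with hple | hpgt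
          · nlinarith
          · have h1 : (p : ℝ) + 2 ≤ (K : ℝ) + 1 := by linarith
            nlinarith [mul_le_mul_of_nonneg_left h1 hp0,
              mul_le_mul_of_nonneg_right hp2R (by positivity : (0 : ℝ) ≤ (K : ℝ) + 1)]
        have hA : (0 : ℝ) ≤ (8 * ((p : ℝ) + 1) - 4 * ((M : ℝ) + 1)) *
            ((M : ℝ) * ((K : ℝ) + 1) - p) :=
          mul_nonneg hc1 (by linarith)
        have hB : (0 : ℝ) ≤ ((M : ℝ) + 1) * ((M : ℝ) * ((K : ℝ) + 1) - 4 * p) :=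
          mul_nonneg (by positivity) (by linarith)
        nlinarith [hA, hB]
      have hB1 : ((K : ℝ) + 1 - (p : ℝ) / M) / (M + 1)
          ≤ max 1 (lbSup K M ((p : ℝ) / M)) := by
        rw [← hval]; exact hle.trans (le_max_right _ _)
      calc deltaOS K M p ≤ ((K : ℝ) + 1) / (1 + p) := hOS
        _ ≤ 8 / 3 * (((K : ℝ) + 1 - (p : ℝ) / M) / (M + 1)) := hkey
        _ ≤ 8 / 3 * max 1 (lbSup K M ((p : ℝ) / M)) := by nlinarith [hB1]
  · -- K ≤ p : value is K/K = 1
    push_neg at hpK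
    have hKR : (K : ℝ) ≤ 1 + p := by
      have : (K : ℝ) ≤ p := Nat.cast_le.mpr hpK; linarith
    have hmin : min (K : ℝ) (1 + (p : ℝ)) = K := min_eq_left hKR
    have hK0 : (K : ℝ) ≠ 0 := by positivity
    rw [deltaOS, if_neg (by omega), hmin]
    apply max_le
    · linarith
    · rw [mul_zero, add_zero, div_self hK0]; linarith
end

section
/- Fix integers K, M, p with 1 ≤ K ≤ p ≤ M and 2p ≥ M − 1, and set μ = p/M. Then (a) the one-shot NDT satisfies δ_OS(μ) = 1, and (b) every admissible pair (ℓ,s) satisfies δ_LB(μ,ℓ,s) ≤ 1, so the Theorem-1 lower bound max{1, max over admissible (ℓ,s) of δ_LB(μ,ℓ,s)} equals 1. Hence the one-shot scheme achieves the minimum NDT δ*(μ) = 1 in this regime (Corollary 1). -/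
/-- Corollary 1: for 1 ≤ K ≤ p ≤ M with 2p ≥ M − 1 and μ = p/M,
the one-shot NDT equals 1, every admissible pair gives δ_LB ≤ 1, and the Theorem-1
lower bound max{1, max over admissible (ℓ,s)} equals 1; hence δ*(μ) = 1. -/
theorem stmt18 (K M p : ℕ) (hK : 1 ≤ K) (hKp : K ≤ p) (hpM : p ≤ M)
    (h2p : M - 1 ≤ 2 * p) :
    deltaOS K M p = 1 ∧
    (∀ ℓ s : ℕ, Admissible K M ℓ s → deltaLB K M ((p : ℝ) / M) ℓ s ≤ 1) ∧
    max 1 (lbSup K M ((p : ℝ) / M)) = 1 := by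

  have hM1 : 1 ≤ M := le_trans (le_trans hK hKp) hpM
  have hMr : (1:ℝ) ≤ M := by exact_mod_cast hM1
  have hKr : (1:ℝ) ≤ K := by exact_mod_cast hK
  have hKpr : (K:ℝ) ≤ p := by exact_mod_cast hKp
  have hpMr : (p:ℝ) ≤ M := by exact_mod_cast hpM
  have hMle : M ≤ 2 * p + 1 := by omega
  have hMler : (M:ℝ) ≤ 2 * p + 1 := by exact_mod_cast hMle
  have hLB : ∀ ℓ s : ℕ, Admissible K M ℓ s → deltaLB K M ((p : ℝ) / M) ℓ s ≤ 1 := by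
    intro ℓ s ⟨hs1, hs2, hℓ1, hℓ2⟩
    have hsK : s ≤ K := le_trans hs2 (min_le_right _ _)
    have hsM : s ≤ M := le_trans hsK (le_trans hKp hpM)
    have hℓ1' : M + 1 - s ≤ ℓ := hℓ1
    have hℓr : (M:ℝ) + 1 - s ≤ ℓ := by
      have : ((M + 1 - s : ℕ) : ℝ) ≤ ℓ := by exact_mod_cast hℓ1'
      rw [Nat.cast_sub (by omega : s ≤ M + 1)] at this; push_cast at this; linarith
    have hs1r : (1:ℝ) ≤ s := by exact_mod_cast hs1
    have hsKr : (s:ℝ) ≤ K := by exact_mod_cast hsK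
    have hsMr : (s:ℝ) ≤ M := by exact_mod_cast hsM
    have hℓMr : (ℓ:ℝ) ≤ M := by exact_mod_cast hℓ2
    have hspos : (0:ℝ) < s := by linarith
    have hMpos : (0:ℝ) < M := by linarith
    rw [deltaLB, div_le_one hspos, sub_le_iff_le_add, ← sub_le_iff_le_add',
      div_mul_eq_mul_div, le_div_iff₀ hMpos]
    -- key inequality
    set sb : ℝ := (M:ℝ) + 1 - s with hsb
    have key1 : sb * ((K:ℝ) + ℓ - s) ≤ sb * ((K:ℝ) - s + (sb - 1)/2) + (ℓ:ℝ) * (ℓ + 1)/2 := by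
      nlinarith [sq_nonneg ((ℓ:ℝ) - sb), hℓr]
    have key2 : (M:ℝ) ≤ (p:ℝ) * sb := by
      nlinarith [mul_nonneg (sub_nonneg.2 hpMr) (sub_nonneg.2 (le_trans hKr hKpr))]
    have hKℓs : (0:ℝ) ≤ (K:ℝ) + ℓ - s := by linarith
    calc ((K:ℝ) + ℓ - s) * M ≤ ((K:ℝ) + ℓ - s) * ((p:ℝ) * sb) :=
            mul_le_mul_of_nonneg_left key2 hKℓs
      _ ≤ (p:ℝ) * (sb * ((K:ℝ) - s + (sb - 1)/2) + (ℓ:ℝ) * (ℓ + 1)/2) := by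
            nlinarith [mul_le_mul_of_nonneg_left key1 (by linarith : (0:ℝ) ≤ (p:ℝ))]
  refine ⟨?_, hLB, ?_⟩
  · have hnotlt : ¬ (p < K) := not_lt.2 hKp
    have hminK : min (K:ℝ) (1 + p) = K := min_eq_left (by linarith)
    have hMAN : deltaMAN M p ≤ 1 := by
      rw [deltaMAN, div_le_one (by positivity)]
      linarith
    rw [deltaOS, if_neg hnotlt, hminK, mul_zero, add_zero,
      div_self (by linarith : (K:ℝ) ≠ 0), max_eq_right hMAN]
  · rw [max_eq_left]
    apply Real.sSup_le _ zero_le_one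
    rintro x ⟨ℓ, s, hadm, rfl⟩
    exact hLB ℓ s hadm
end

section
/- Let g₁, g₂, g₃, h₁, h₂, h₃ be nonzero complex numbers, with indices extended periodically modulo 3 (g_{r+3} = g_r, h_{r+3} = h_r). For r ∈ {1,2,3} set j_r = g_{r+1}h_{r+2} − g_{r+2}h_{r+1} and assume j_r ≠ 0. Define ν₄₅ = j₁j₂j₃ · g₁g₂g₃ · h₁h₂h₃, and for each r ∈ {1,2,3} define: β⁽⁴⁾_r = ν₄₅ · g_{r+2}/h_{r+2}; (ν⁽²⁾_r, β⁽²⁾_r) = ν₄₅ · (g_{r+2}h_{r+1}/j_r) · (1, −g_{r+2}/h_{r+2}); ν⁽⁵⁾_{r+2} = ν₄₅ · g_{r+2}h_{r+1}/(h_{r+2}g_{r+1}); (ν⁽³⁾_{r+1}, β⁽³⁾_{r+1}) = ν₄₅ · (g_{r+2}h_{r+1}g_r/(g_{r+1}j_{r+1})) · (−1, g_{r+2}/h_{r+2}); (ν⁽¹⁾_{r+2}, β⁽¹⁾_{r+2}) = ν₄₅ · (g_{r+2}h_{r+1}g_r/(h_{r+2}j_{r+2})) · (h_{r+1}/g_{r+1},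 −1). Then for every k ∈ {1,2,3}: the zero-forcing conditions g_k ν⁽¹⁾_{k+1} + h_k β⁽¹⁾_{k+1} = 0, g_k ν⁽²⁾_{k+1} + h_k β⁽²⁾_{k+1} = 0 and g_k ν⁽³⁾_{k+2} + h_k β⁽³⁾_{k+2} = 0 hold; and the interference-alignment conditions g_k ν₄₅ = h_k β⁽⁴⁾_{k+1}, h_k β⁽⁴⁾_{k+2} = g_k ν⁽²⁾_{k+2} + h_k β⁽²⁾_{k+2} = g_k ν⁽⁵⁾_{k+1}, and g_k ν⁽⁵⁾_{k+2} = g_k ν⁽¹⁾_{k+2} + h_k β⁽¹⁾_{k+2} = g_k ν⁽³⁾_{k+1} + h_k β⁽³⁾_{k+1} hold. -/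
private lemma aux7 (v g0 g1 g2 h0 h1 h2 J : ℂ) (hg1 : g1 ≠ 0) (hh2 : h2 ≠ 0)
    (hJ : J ≠ 0) (hJd : J = g0 * h1 - g1 * h0) :
    g0 * (v * (g2 * h1 / (h2 * g1))) =
      g0 * (v * (g2 * h1 * g0 / (h2 * J)) * (h1 / g1)) +
        h0 * (v * (g2 * h1 * g0 / (h2 * J)) * -1) := by
  have hJ' : g0 * h1 - g1 * h0 ≠ 0 := hJd ▸ hJ
  subst hJd
  field_simp
  ring

/-- zero-forcing and interference-alignment conditions for the precoder
design achieving the NDT corner point (4/5, 8/5) for M = 1 relay and K = 3 users.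
Indices are taken modulo 3 (so index 3 equals index 0 in `ZMod 3`); `g k` is the
base-station-to-user-k channel, `h k` the relay-to-user-k channel, `ν…` base-station
precoding scalars and `β…` relay precoding scalars for the indicated file symbols. -/
theorem stmt19 (g h : ZMod 3 → ℂ) (hg : ∀ r, g r ≠ 0) (hh : ∀ r, h r ≠ 0)
    (j : ZMod 3 → ℂ)
    (hj : ∀ r, j r = g (r + 1) * h (r + 2) - g (r + 2) * h (r + 1))
    (hjne : ∀ r, j r ≠ 0)
    (ν45 : ℂ)
    (hν45 : ν45 = j 1 * j 2 * j 3 * (g 1 * g 2 * g 3) * (h 1 * h 2 * h 3))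
    (β4 : ZMod 3 → ℂ)
    (hβ4 : ∀ r, β4 r = ν45 * (g (r + 2) / h (r + 2)))
    (ν2 β2 : ZMod 3 → ℂ)
    (hν2 : ∀ r, ν2 r = ν45 * (g (r + 2) * h (r + 1) / j r) * 1)
    (hβ2 : ∀ r, β2 r = ν45 * (g (r + 2) * h (r + 1) / j r) * (-(g (r + 2) / h (r + 2))))
    (ν5 : ZMod 3 → ℂ)
    (hν5 : ∀ r, ν5 (r + 2) = ν45 * (g (r + 2) * h (r + 1) / (h (r + 2) * g (r + 1))))
    (ν3 β3 : ZMod 3 → ℂ)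
    (hν3 : ∀ r, ν3 (r + 1) =
      ν45 * (g (r + 2) * h (r + 1) * g r / (g (r + 1) * j (r + 1))) * (-1))
    (hβ3 : ∀ r, β3 (r + 1) =
      ν45 * (g (r + 2) * h (r + 1) * g r / (g (r + 1) * j (r + 1))) * (g (r + 2) / h (r + 2)))
    (ν1 β1 : ZMod 3 → ℂ)
    (hν1 : ∀ r, ν1 (r + 2) =
      ν45 * (g (r + 2) * h (r + 1) * g r / (h (r + 2) * j (r + 2))) * (h (r + 1) / g (r + 1)))
    (hβ1 : ∀ r, β1 (r + 2) =
      ν45 * (g (r + 2) * h (r + 1) * g r / (h (r + 2) * j (r + 2))) * (-1)) :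
    ∀ k : ZMod 3,
      -- zero-forcing conditions
      (g k * ν1 (k + 1) + h k * β1 (k + 1) = 0) ∧
      (g k * ν2 (k + 1) + h k * β2 (k + 1) = 0) ∧
      (g k * ν3 (k + 2) + h k * β3 (k + 2) = 0) ∧
      -- interference-alignment conditions
      (g k * ν45 = h k * β4 (k + 1)) ∧
      (h k * β4 (k + 2) = g k * ν2 (k + 2) + h k * β2 (k + 2)) ∧
      (h k * β4 (k + 2) = g k * ν5 (k + 1)) ∧
      (g k * ν5 (k + 2) = g k * ν1 (k + 2) + h k * β1 (k + 2)) ∧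
      (g k * ν5 (k + 2) = g k * ν3 (k + 1) + h k * β3 (k + 1)) := by
  intro k
  have c1 : (1 + 1 : ZMod 3) = 2 := rfl
  have c2 : (1 + 2 : ZMod 3) = 0 := rfl
  have c3 : (2 + 1 : ZMod 3) = 0 := rfl
  have c4 : (2 + 2 : ZMod 3) = 1 := rfl
  have E1 : k + 1 + 1 = k + 2 := by rw [add_assoc, c1]
  have E2 : k + 1 + 2 = k := by rw [add_assoc, c2, add_zero]
  have E3 : k + 2 + 1 = k := by rw [add_assoc, c3, add_zero]
  have E4 : k + 2 + 2 = k + 1 := by rw [add_assoc, c4]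
  -- nonzero facts
  have hg0 := hg k; have hg1 := hg (k+1); have hg2 := hg (k+2)
  have hh0 := hh k; have hh1 := hh (k+1); have hh2 := hh (k+2)
  have hJ0 := hjne k; have hJ1 := hjne (k+1); have hJ2 := hjne (k+2)
  have hjk := hj k; have hjk1 := hj (k+1); have hjk2 := hj (k+2)
  simp only [E1, E2, E3, E4] at hjk hjk1 hjk2
  -- instantiated definitions with normalized indices
  have A1 := hν1 (k+2); have A1' := hβ1 (k+2)
  have B1 := hν1 k; have B1' := hβ1 k
  have A2 := hν2 (k+1); have A2' := hβ2 (k+1)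
  have B2 := hν2 (k+2); have B2' := hβ2 (k+2)
  have A3 := hν3 (k+1); have A3' := hβ3 (k+1)
  have B3 := hν3 k; have B3' := hβ3 k
  have A4 := hβ4 (k+1); have B4 := hβ4 (k+2)
  have A5 := hν5 (k+2); have B5 := hν5 k
  simp only [E1, E2, E3, E4] at A1 A1' B1 B1' A2 A2' B2 B2' A3 A3' B3 B3' A4 B4 A5 B5
  rw [hjk1] at hJ1
  rw [hjk2] at hJ2
  refine ⟨?_, ?_, ?_, ?_, ?_, ?_, ?_, ?_⟩
  · rw [A1, A1', hjk1]; field_simp; ring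
  · rw [A2, A2', hjk1]; field_simp; ring
  · rw [A3, A3', hjk2]; field_simp; ring
  · rw [A4]; field_simp
  · rw [B4, B2, B2', hjk2]; field_simp
    have hD : h (k + 1) * g k - h k * g (k + 1) ≠ 0 := by
      intro H; apply hJ2; linear_combination H
    linear_combination (-ν45) * mul_inv_cancel₀ hD
  · rw [B4, A5]; field_simp
  · rw [B5, B1, B1']
    exact aux7 ν45 (g k) (g (k+1)) (g (k+2)) (h k) (h (k+1)) (h (k+2)) (j (k+2))
      hg1 hh2 (hjne (k+2)) hjk2
  · rw [B5, B3, B3', hjk1]; field_simp; ring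
end
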